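/- Let D be a division ring, K a proper division subring, and N a normal subgroup of D* radical over K. If a ∈ K ∩ N, b ∈ N \ K, and a ≠ 1, a ≠ −1, b ≠ ±1, a + b ≠ 0, then there exists a positive integer m such that aᵐ b = b aᵐ. -/

import Mathlib

/-- Let `K` be a proper division subring of a division ring `D` and `N` a normal
subgroup of `D*` radical over `K`. If `a ∈ K ∩ N`, `b ∈ N \ K`, `a ≠ ±1`, `b ≠ ±1`
and `a + b ≠ 0`, then some positive power of `a` commutes with `b`. -/
theorem stmt_11 (D : Type*) [DivisionRing D] (K : Subfield D) (hK : K ≠ ⊤)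
    (N : Subgroup Dˣ) (hNnormal : N.Normal)
    (hrad : ∀ x ∈ N, ∃ n : ℕ, 0 < n ∧ ((x : Dˣ) : D) ^ n ∈ K)
    (a b : Dˣ) (haN : a ∈ N) (hbN : b ∈ N)
    (haK : (a : D) ∈ K) (hbK : (b : D) ∉ K)
    (ha1 : (a : D) ≠ 1) (ha1' : (a : D) ≠ -1)
    (hb1 : (b : D) ≠ 1) (hb1' : (b : D) ≠ -1)
    (hab : (a : D) + (b : D) ≠ 0) :
    ∃ m : ℕ, 0 < m ∧ (a : D) ^ m * (b : D) = (b : D) * (a : D) ^ m := by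
  have hv0 : (b : D) + 1 ≠ 0 := fun h => hb1' (eq_neg_of_add_eq_zero_left h)
  set u : Dˣ := Units.mk0 ((a : D) + (b : D)) hab with hu
  set v : Dˣ := Units.mk0 ((b : D) + 1) hv0 with hv
  set x : Dˣ := u * a * u⁻¹ with hxdef
  set y : Dˣ := v * a * v⁻¹ with hydef
  have hxN : x ∈ N := hNnormal.conj_mem a haN u
  have hyN : y ∈ N := hNnormal.conj_mem a haN v
  obtain ⟨n₁, hn₁, hxK⟩ := hrad x hxN
  obtain ⟨n₂, hn₂, hyK⟩ := hrad y hyN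
  set m := n₁ * n₂ with hm
  have hmpos : 0 < m := Nat.mul_pos hn₁ hn₂
  refine ⟨m, hmpos, ?_⟩
  set A : D := (a : D) with hA
  set B : D := (b : D) with hB
  set X : D := (x : D) ^ m with hXdef
  set Y : D := (y : D) ^ m with hYdef
  have hXK : X ∈ K := by rw [hXdef, hm, pow_mul]; exact pow_mem hxK n₂
  have hYK : Y ∈ K := by rw [hYdef, hm, Nat.mul_comm, pow_mul]; exact pow_mem hyK n₁
  have hxp : x ^ m = u * a ^ m * u⁻¹ := by
    rw [hxdef, ← MulAut.conj_apply, ← map_pow, MulAut.conj_apply]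
  have hyp : y ^ m = v * a ^ m * v⁻¹ := by
    rw [hydef, ← MulAut.conj_apply, ← map_pow, MulAut.conj_apply]
  have hcomm : A * A ^ m = A ^ m * A := (pow_mul_comm' A m).symm
  have e1 : X * (A + B) = (A + B) * A ^ m := by
    have h : ((x ^ m : Dˣ) : D) * ((u : Dˣ) : D) = ((u : Dˣ) : D) * ((a ^ m : Dˣ) : D) := by
      rw [hxp]
      push_cast
      simp [mul_assoc]
    simpa [X, A, B, hu, Units.val_pow_eq_pow_val] using h
  have e2 : Y * (B + 1) = (B + 1) * A ^ m := by
    have h : ((y ^ m : Dˣ) : D) * ((v : Dˣ) : D) = ((v : Dˣ) : D) * ((a ^ m : Dˣ) : D) := by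
      rw [hyp]
      push_cast
      simp [mul_assoc]
    simpa [Y, A, B, hv, Units.val_pow_eq_pow_val] using h
  clear_value A B X Y
  clear hxp hyp hxK hyK hxN hyN hxdef hydef hu hv
  have key : (X - Y) * B = A ^ m * (A - 1) + Y - X * A := by
    linear_combination (norm := noncomm_ring) e1 - e2 + hcomm
  have hXY : X = Y := by
    by_contra hne
    have hXYne : X - Y ≠ 0 := sub_ne_zero_of_ne hne
    have hBval : B = (X - Y)⁻¹ * (A ^ m * (A - 1) + Y - X * A) := by
      rw [← key, ← mul_assoc, inv_mul_cancel₀ hXYne, one_mul]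
    exact hbK (hBval ▸ mul_mem (inv_mem (sub_mem hXK hYK))
      (sub_mem (add_mem (mul_mem (pow_mem haK m) (sub_mem haK (one_mem K))) hYK)
        (mul_mem hXK haK)))
  have h0 : (X - A ^ m) * (A - 1) = 0 := by
    have k := key
    rw [hXY, sub_self, zero_mul, ← hXY] at k
    linear_combination (norm := noncomm_ring) k
  have hXA : X = A ^ m := by
    rcases mul_eq_zero.mp h0 with h | h
    · exact sub_eq_zero.mp h
    · exact absurd h (sub_ne_zero_of_ne ha1)
  have h2 : A ^ m * (B + 1) = (B + 1) * A ^ m := by rw [← hXY, hXA] at e2; exact e2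
  rw [mul_add, add_mul, mul_one, one_mul] at h2
  exact add_right_cancel h2
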